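/- arXiv:math/0703321 — 2 statements merged into one kernel-verified Lean document; each statement's English description precedes it below -/
import Mathlib

section
/- Let λ ≠ μ be real numbers and let δ be a self-adjoint endomorphism of V whose eigenspace for λ has dimension 2 and whose eigenspace for μ has dimension 5. Then there exists a Cayley triple (u, v, z) such that δ(u) = λ•u, δ(v) = λ•v, and δ(x) = μ•x for each x ∈ {uv, z, uz, vz, (uv)z}. -/
open scoped RealInnerProductSpace

section Aux

variable {V : Type*} [NormedAddCommGroup V] [InnerProductSpace ℝ V]

lemma on2 {u v : V} (hu : ‖u‖ = 1) (hv : ‖v‖ = 1) (huv : ⟪u, v⟫ = 0) :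
    Orthonormal ℝ ![u, v] := by
  have huv' : ⟪v, u⟫ = 0 := by rw [real_inner_comm]; exact huv
  rw [orthonormal_iff_ite]
  intro i j
  fin_cases i <;> fin_cases j <;>
    simp [hu, hv, huv, huv', real_inner_self_eq_norm_mul_norm]

variable (π : V →ₗ[ℝ] V →ₗ[ℝ] V)

lemma pi_swap (hπalt : ∀ x : V, π x x = 0) (a b : V) : π a b = - π b a := by
  have h := hπalt (a + b)
  simp only [map_add, LinearMap.add_apply, hπalt, zero_add, add_zero] at h
  exact eq_neg_of_add_eq_zero_right h

variable (hπalt : ∀ x : V, π x x = 0)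
  (hπvp : ∀ u v : V, Orthonormal ℝ ![u, v] → Orthonormal ℝ ![u, v, π u v])

include hπalt hπvp in
lemma inner_pi_left (a b : V) : ⟪π a b, a⟫ = 0 := by
  rcases eq_or_ne a 0 with rfl | ha
  · simp
  have hna : ‖a‖ ≠ 0 := norm_ne_zero_iff.mpr ha
  set c : V := b - (⟪a, b⟫ / ‖a‖ ^ 2) • a with hc
  have hac : ⟪a, c⟫ = 0 := by
    rw [hc, inner_sub_right, real_inner_smul_right, real_inner_self_eq_norm_sq]
    field_simp
    ring
  have hab : π a b = π a c := by
    rw [hc]; simp [hπalt]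
  rcases eq_or_ne c 0 with hc0 | hc0
  · rw [hab, hc0]; simp
  have hnc : ‖c‖ ≠ 0 := norm_ne_zero_iff.mpr hc0
  have hon : Orthonormal ℝ ![‖a‖⁻¹ • a, ‖c‖⁻¹ • c] :=
    on2 (norm_smul_inv_norm ha) (norm_smul_inv_norm hc0)
      (by rw [real_inner_smul_left, real_inner_smul_right, hac]; ring)
  have h3 := hπvp _ _ hon
  have h4 : ⟪π (‖a‖⁻¹ • a) (‖c‖⁻¹ • c), ‖a‖⁻¹ • a⟫ = 0 := by
    have := h3.2 (show (2 : Fin 3) ≠ 0 by decide)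
    simpa using this
  simp only [map_smul, LinearMap.smul_apply, real_inner_smul_left, real_inner_smul_right] at h4
  rw [hab]
  simpa [mul_eq_zero, inv_eq_zero, hna, hnc] using h4

include hπalt hπvp in
lemma inner_pi_right (a b : V) : ⟪π a b, b⟫ = 0 := by
  rw [pi_swap π hπalt a b]
  simp [inner_pi_left π hπalt hπvp b a]

include hπalt hπvp in
lemma T_swap23 (a b c : V) : ⟪π a b, c⟫ = -⟪π a c, b⟫ := by
  have h := inner_pi_right π hπalt hπvp a (b + c)
  simp only [map_add, inner_add_left, inner_add_right,
    inner_pi_right π hπalt hπvp] at h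
  linarith

include hπalt hπvp in
lemma pi_pi {u v : V} (hu : ‖u‖ = 1) (hv : ‖v‖ = 1) (huv : ⟪u, v⟫ = 0) :
    π u (π u v) = -v := by
  have hon := hπvp u v (on2 hu hv huv)
  have hw1 : ‖π u v‖ = 1 := by simpa using hon.1 2
  have huw : ⟪u, π u v⟫ = 0 := by
    simpa using hon.2 (show (0 : Fin 3) ≠ 2 by decide)
  have h2 : ‖π u (π u v)‖ = 1 := by
    simpa using (hπvp u (π u v) (on2 hu hw1 huw)).1 2
  have h3 : ⟪π u (π u v), v⟫ = -1 := by
    rw [T_swap23 π hπalt hπvp u (π u v) v, real_inner_self_eq_norm_mul_norm, hw1]; ring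
  have key : ⟪π u (π u v) + v, π u (π u v) + v⟫ = 0 := by
    have e1 : ⟪π u (π u v), π u (π u v)⟫ = 1 := by
      rw [real_inner_self_eq_norm_mul_norm, h2]; ring
    have e2 : ⟪v, v⟫ = 1 := by rw [real_inner_self_eq_norm_mul_norm, hv]; ring
    have e3 : ⟪v, π u (π u v)⟫ = -1 := by rw [real_inner_comm]; exact h3
    rw [inner_add_left, inner_add_right, inner_add_right, e1, e2, e3, h3]; ring
  have h0 : π u (π u v) + v = 0 := by rwa [inner_self_eq_zero] at key
  exact eq_neg_of_add_eq_zero_left h0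

end Aux
theorem stmt8
    {V : Type*} [NormedAddCommGroup V] [InnerProductSpace ℝ V]
    [FiniteDimensional ℝ V] (hdim : Module.finrank ℝ V = 7)
    (π : V →ₗ[ℝ] V →ₗ[ℝ] V) (hπalt : ∀ x : V, π x x = 0)
    (hπvp : ∀ u v : V, Orthonormal ℝ ![u, v] → Orthonormal ℝ ![u, v, π u v])
    (lam μ : ℝ) (hlm : lam ≠ μ)
    (δ : V →ₗ[ℝ] V) (hδ : LinearMap.IsSymmetric δ)
    (h2 : Module.finrank ℝ (Module.End.eigenspace δ lam) = 2)
    (h5 : Module.finrank ℝ (Module.End.eigenspace δ μ) = 5) :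
    ∃ u v z : V, Orthonormal ℝ ![u, v, π u v, z] ∧
      δ u = lam • u ∧ δ v = lam • v ∧ δ (π u v) = μ • π u v ∧ δ z = μ • z ∧
      δ (π u z) = μ • π u z ∧ δ (π v z) = μ • π v z ∧
      δ (π (π u v) z) = μ • π (π u v) z := by
  classical
  set Elam := Module.End.eigenspace δ lam with hEl
  set Emu := Module.End.eigenspace δ μ with hEm
  have hle : Emu ≤ Elamᗮ := by
    intro x hx
    rw [Submodule.mem_orthogonal]
    intro y hy
    simpa using hδ.orthogonalFamily_eigenspaces hlm ⟨y, hy⟩ ⟨x, hx⟩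
  have horth : Module.finrank ℝ Elam + Module.finrank ℝ Elamᗮ = 7 := by
    rw [Submodule.finrank_add_finrank_orthogonal, hdim]
  have hEmu_eq : Emu = Elamᗮ := Submodule.eq_of_le_of_finrank_eq hle (by omega)
  -- orthonormal pair in Elam
  let b := (stdOrthonormalBasis ℝ Elam).reindex (finCongr h2)
  set u : V := (b 0 : V) with hudef
  set v : V := (b 1 : V) with hvdef
  have hu1 : ‖u‖ = 1 := by exact b.orthonormal.1 0
  have hv1 : ‖v‖ = 1 := by exact b.orthonormal.1 1
  have huv : ⟪u, v⟫ = 0 := by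
    have h := b.orthonormal.2 (show (0 : Fin 2) ≠ 1 by decide)
    rw [hudef, hvdef, ← Submodule.coe_inner]; exact h
  have humem : u ∈ Elam := (b 0).2
  have hvmem : v ∈ Elam := (b 1).2
  -- membership criterion for the eigenvalue μ
  have hmemμ : ∀ x : V, ⟪u, x⟫ = 0 → ⟪v, x⟫ = 0 → δ x = μ • x := by
    intro x hxu hxv
    have hx : x ∈ Emu := by
      rw [hEmu_eq, Submodule.mem_orthogonal]
      intro y hy
      have hrep : (⟨y, hy⟩ : Elam) = b.repr ⟨y, hy⟩ 0 • b 0 + b.repr ⟨y, hy⟩ 1 • b 1 := by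
        have h := b.sum_repr ⟨y, hy⟩
        rw [Fin.sum_univ_two] at h
        exact h.symm
      have hy2 : y = b.repr ⟨y, hy⟩ 0 • u + b.repr ⟨y, hy⟩ 1 • v := by
        have h' := congrArg (Subtype.val) hrep
        simpa using h'
      rw [hy2]
      simp [inner_add_left, real_inner_smul_left, hxu, hxv]
    rwa [Module.End.mem_eigenspace_iff] at hx
  -- properties of w := π u v
  have hon3 := hπvp u v (on2 hu1 hv1 huv)
  have hw1 : ‖π u v‖ = 1 := by simpa using hon3.1 2
  have huw : ⟪u, π u v⟫ = 0 := by simpa using hon3.2 (show (0 : Fin 3) ≠ 2 by decide)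
  have hvw : ⟪v, π u v⟫ = 0 := by simpa using hon3.2 (show (1 : Fin 3) ≠ 2 by decide)
  -- choice of z
  set K := Submodule.span ℝ (Set.range ![u, v, π u v]) with hK
  have hKle : Module.finrank ℝ K ≤ 3 := by
    have h := finrank_span_le_card (R := ℝ) (Set.range ![u, v, π u v])
    rw [Set.toFinset_card] at h
    exact le_trans h (by simpa using Fintype.card_range_le ![u, v, π u v])
  have horthK : Module.finrank ℝ K + Module.finrank ℝ Kᗮ = 7 := by
    rw [Submodule.finrank_add_finrank_orthogonal, hdim]
  have hKbot : Kᗮ ≠ ⊥ := by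
    intro h
    rw [h, finrank_bot] at horthK
    omega
  obtain ⟨z', hz'K, hz'0⟩ := Submodule.exists_mem_ne_zero_of_ne_bot hKbot
  set z : V := ‖z'‖⁻¹ • z' with hzdef
  have hz1 : ‖z‖ = 1 := norm_smul_inv_norm hz'0
  have hinz : ∀ y : V, y ∈ Set.range ![u, v, π u v] → ⟪y, z⟫ = 0 := by
    intro y hy
    have h := (Submodule.mem_orthogonal K z').mp hz'K y (Submodule.subset_span hy)
    rw [hzdef, real_inner_smul_right, h, mul_zero]
  have hzu : ⟪u, z⟫ = 0 := hinz u ⟨0, rfl⟩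
  have hzv : ⟪v, z⟫ = 0 := hinz v ⟨1, rfl⟩
  have hzw : ⟪π u v, z⟫ = 0 := hinz _ ⟨2, rfl⟩
  -- the orthonormal quadruple
  have huv' : ⟪v, u⟫ = 0 := by rw [real_inner_comm]; exact huv
  have huw' : ⟪π u v, u⟫ = 0 := by rw [real_inner_comm]; exact huw
  have hvw' : ⟪π u v, v⟫ = 0 := by rw [real_inner_comm]; exact hvw
  have hzu' : ⟪z, u⟫ = 0 := by rw [real_inner_comm]; exact hzu
  have hzv' : ⟪z, v⟫ = 0 := by rw [real_inner_comm]; exact hzv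
  have hzw' : ⟪z, π u v⟫ = 0 := by rw [real_inner_comm]; exact hzw
  have hquad : Orthonormal ℝ ![u, v, π u v, z] := by
    rw [orthonormal_iff_ite]
    intro i j
    fin_cases i <;> fin_cases j <;>
      simp [hu1, hv1, hw1, hz1, huv, huw, hvw, hzu, hzv, hzw, huv', huw', hvw',
        hzu', hzv', hzw', real_inner_self_eq_norm_mul_norm]
  -- eigen equations
  refine ⟨u, v, z, hquad, Module.End.mem_eigenspace_iff.mp humem,
    Module.End.mem_eigenspace_iff.mp hvmem, hmemμ _ huw hvw, hmemμ _ hzu hzv, ?_, ?_, ?_⟩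
  · -- π u z
    refine hmemμ _ ?_ ?_
    · rw [real_inner_comm]; exact inner_pi_left π hπalt hπvp u z
    · rw [real_inner_comm, T_swap23 π hπalt hπvp u z v, hzw, neg_zero]
  · -- π v z
    refine hmemμ _ ?_ ?_
    · rw [real_inner_comm, T_swap23 π hπalt hπvp v z u]
      simp [pi_swap π hπalt v u, hzw]
    · rw [real_inner_comm]; exact inner_pi_left π hπalt hπvp v z
  · -- π (π u v) z
    have hvw2 : π v (π u v) = u := by
      rw [pi_swap π hπalt u v, map_neg, pi_pi π hπalt hπvp hv1 hu1 huv', neg_neg]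
    have hwu : π (π u v) u = v := by
      rw [pi_swap π hπalt (π u v) u, pi_pi π hπalt hπvp hu1 hv1 huv, neg_neg]
    have hwv : π (π u v) v = -u := by
      rw [pi_swap π hπalt (π u v) v, hvw2]
    refine hmemμ _ ?_ ?_
    · rw [real_inner_comm, T_swap23 π hπalt hπvp (π u v) z u, hwu, hzv, neg_zero]
    · rw [real_inner_comm, T_swap23 π hπalt hπvp (π u v) z v, hwv]
      simp [hzu]
end

section
/- Let λ, μ, ν be pairwise distinct real numbers and let δ be a self-adjoint endomorphism of V whose eigenspaces for λ, μ, ν have dimensions 1, 1, 5 respectively. Then there exists a Cayley triple (u, v, z) such that δ(u) = λ•u, δ(v) = μ•v, and δ(x) = ν•x for each x ∈ {uv, z, uz, vz, (uv)z}. -/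
open scoped RealInnerProductSpace

section Aux

variable {V : Type*} [NormedAddCommGroup V] [InnerProductSpace ℝ V]

private lemma on2_s9 {a b : V} (ha : ‖a‖ = 1) (hb : ‖b‖ = 1) (hab : ⟪a, b⟫ = 0) :
    Orthonormal ℝ ![a, b] := by
  have hba : ⟪b, a⟫ = 0 := by rw [real_inner_comm]; exact hab
  rw [orthonormal_iff_ite]
  intro i j
  fin_cases i <;> fin_cases j <;>
    simp [real_inner_self_eq_norm_mul_norm, ha, hb, hab, hba]

private lemma on4 {a b c d : V} (ha : ‖a‖ = 1) (hb : ‖b‖ = 1) (hc : ‖c‖ = 1) (hd : ‖d‖ = 1)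
    (hab : ⟪a, b⟫ = 0) (hac : ⟪a, c⟫ = 0) (had : ⟪a, d⟫ = 0)
    (hbc : ⟪b, c⟫ = 0) (hbd : ⟪b, d⟫ = 0) (hcd : ⟪c, d⟫ = 0) :
    Orthonormal ℝ ![a, b, c, d] := by
  have hba : ⟪b, a⟫ = 0 := by rw [real_inner_comm]; exact hab
  have hca : ⟪c, a⟫ = 0 := by rw [real_inner_comm]; exact hac
  have hda : ⟪d, a⟫ = 0 := by rw [real_inner_comm]; exact had
  have hcb : ⟪c, b⟫ = 0 := by rw [real_inner_comm]; exact hbc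
  have hdb : ⟪d, b⟫ = 0 := by rw [real_inner_comm]; exact hbd
  have hdc : ⟪d, c⟫ = 0 := by rw [real_inner_comm]; exact hcd
  rw [orthonormal_iff_ite]
  intro i j
  fin_cases i <;> fin_cases j <;>
    simp [real_inner_self_eq_norm_mul_norm, ha, hb, hc, hd,
      hab, hac, had, hbc, hbd, hcd, hba, hca, hda, hcb, hdb, hdc]

variable (π : V →ₗ[ℝ] V →ₗ[ℝ] V)

private lemma pi_neg (hπalt : ∀ x : V, π x x = 0) (x y : V) : π y x = - π x y := by
  have h := hπalt (x + y)
  simp only [map_add, LinearMap.add_apply, hπalt, zero_add, add_zero] at h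
  exact eq_neg_of_add_eq_zero_left h

private lemma pi_inner_right (hπalt : ∀ x : V, π x x = 0)
    (hπvp : ∀ u v : V, Orthonormal ℝ ![u, v] → Orthonormal ℝ ![u, v, π u v]) (x y : V) : ⟪π x y, y⟫ = 0 := by
  by_cases hy : y = 0
  · simp [hy]
  have hyy : (⟪y, y⟫ : ℝ) ≠ 0 := (inner_self_ne_zero (𝕜 := ℝ)).mpr hy
  obtain ⟨c, w, hwy, hx⟩ : ∃ (c : ℝ) (w : V), ⟪w, y⟫ = 0 ∧ x = w + c • y := by
    refine ⟨⟪x, y⟫ / ⟪y, y⟫, x - (⟪x, y⟫ / ⟪y, y⟫) • y, ?_, by abel⟩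
    rw [inner_sub_left, real_inner_smul_left]
    field_simp
    ring
  subst hx
  have hπxy : π (w + c • y) y = π w y := by
    simp [map_add, hπalt]
  rw [hπxy]
  by_cases hw : w = 0
  · simp [hw]
  set a : V := ‖w‖⁻¹ • w with hadef
  set b : V := ‖y‖⁻¹ • y with hbdef
  have hna : ‖a‖ = 1 := norm_smul_inv_norm hw
  have hnb : ‖b‖ = 1 := norm_smul_inv_norm hy
  have hab : ⟪a, b⟫ = 0 := by
    simp [hadef, hbdef, real_inner_smul_left, real_inner_smul_right, hwy]
  have h3 := hπvp a b (on2_s9 hna hnb hab)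
  have key : ⟪π a b, b⟫ = 0 := by
    have := h3.2 (show (2 : Fin 3) ≠ 1 by decide)
    simpa using this
  have hwa : w = ‖w‖ • a := by
    rw [hadef, smul_smul, mul_inv_cancel₀ (norm_ne_zero_iff.mpr hw), one_smul]
  have hyb : y = ‖y‖ • b := by
    rw [hbdef, smul_smul, mul_inv_cancel₀ (norm_ne_zero_iff.mpr hy), one_smul]
  calc ⟪π w y, y⟫ = ⟪π (‖w‖ • a) (‖y‖ • b), ‖y‖ • b⟫ := by rw [← hwa, ← hyb]
    _ = ‖w‖ * ‖y‖ * ‖y‖ * ⟪π a b, b⟫ := by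
        simp [map_smul, real_inner_smul_left, real_inner_smul_right]; ring
    _ = 0 := by rw [key]; ring

private lemma pi_inner_left (hπalt : ∀ x : V, π x x = 0)
    (hπvp : ∀ u v : V, Orthonormal ℝ ![u, v] → Orthonormal ℝ ![u, v, π u v]) (x y : V) : ⟪π x y, x⟫ = 0 := by
  rw [pi_neg π hπalt y x]
  simp [pi_inner_right π hπalt hπvp y x]

private lemma pi_skew (hπalt : ∀ x : V, π x x = 0)
    (hπvp : ∀ u v : V, Orthonormal ℝ ![u, v] → Orthonormal ℝ ![u, v, π u v]) (x y w : V) : ⟪π x y, w⟫ = - ⟪π x w, y⟫ := by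
  have h := pi_inner_right π hπalt hπvp x (y + w)
  have hy := pi_inner_right π hπalt hπvp x y
  have hw := pi_inner_right π hπalt hπvp x w
  simp only [map_add, inner_add_left, inner_add_right] at h
  rw [hy, hw] at h
  linarith

private lemma pi_norm_orth (hπalt : ∀ x : V, π x x = 0)
    (hπvp : ∀ u v : V, Orthonormal ℝ ![u, v] → Orthonormal ℝ ![u, v, π u v]) {x w : V} (hwx : ⟪x, w⟫ = 0) :
    ⟪π x w, π x w⟫ = ⟪x, x⟫ * ⟪w, w⟫ := by
  by_cases hx : x = 0
  · simp [hx]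
  by_cases hw : w = 0
  · simp [hw]
  set a : V := ‖x‖⁻¹ • x with hadef
  set b : V := ‖w‖⁻¹ • w with hbdef
  have hna : ‖a‖ = 1 := norm_smul_inv_norm hx
  have hnb : ‖b‖ = 1 := norm_smul_inv_norm hw
  have hab : ⟪a, b⟫ = 0 := by
    simp [hadef, hbdef, real_inner_smul_left, real_inner_smul_right, hwx]
  have h3 := hπvp a b (on2_s9 hna hnb hab)
  have key : ‖π a b‖ = 1 := by
    have := h3.1 2
    simpa using this
  have hxa : x = ‖x‖ • a := by
    rw [hadef, smul_smul, mul_inv_cancel₀ (norm_ne_zero_iff.mpr hx), one_smul]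
  have hwb : w = ‖w‖ • b := by
    rw [hbdef, smul_smul, mul_inv_cancel₀ (norm_ne_zero_iff.mpr hw), one_smul]
  calc ⟪π x w, π x w⟫ = ⟪π (‖x‖ • a) (‖w‖ • b), π (‖x‖ • a) (‖w‖ • b)⟫ := by
        rw [← hxa, ← hwb]
    _ = (‖x‖ * ‖x‖) * ((‖w‖ * ‖w‖) * ⟪π a b, π a b⟫) := by
        simp [map_smul, real_inner_smul_left, real_inner_smul_right, norm_smul]; ring
    _ = ⟪x, x⟫ * ⟪w, w⟫ := by
        rw [real_inner_self_eq_norm_mul_norm, real_inner_self_eq_norm_mul_norm,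
          real_inner_self_eq_norm_mul_norm, key]
        ring

private lemma pi_contract (hπalt : ∀ x : V, π x x = 0)
    (hπvp : ∀ u v : V, Orthonormal ℝ ![u, v] → Orthonormal ℝ ![u, v, π u v]) (x y : V) :
    ⟪π x y, π x y⟫ = ⟪x, x⟫ * ⟪y, y⟫ - ⟪x, y⟫ * ⟪x, y⟫ := by
  by_cases hx : x = 0
  · simp [hx]
  have hxx : (⟪x, x⟫ : ℝ) ≠ 0 := (inner_self_ne_zero (𝕜 := ℝ)).mpr hx
  obtain ⟨c, w, hwx, hy⟩ : ∃ (c : ℝ) (w : V), ⟪x, w⟫ = 0 ∧ y = w + c • x := by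
    refine ⟨⟪x, y⟫ / ⟪x, x⟫, y - (⟪x, y⟫ / ⟪x, x⟫) • x, ?_, by abel⟩
    rw [inner_sub_right, real_inner_smul_right]
    field_simp
    ring
  subst hy
  have hwx' : ⟪w, x⟫ = 0 := by rw [real_inner_comm]; exact hwx
  have hπxy : π x (w + c • x) = π x w := by
    simp [map_add, map_smul, hπalt]
  rw [hπxy, pi_norm_orth π hπalt hπvp hwx]
  simp only [inner_add_right, inner_add_left, real_inner_smul_left, real_inner_smul_right,
    hwx, hwx']
  ring

private lemma pi_contract' (hπalt : ∀ x : V, π x x = 0)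
    (hπvp : ∀ u v : V, Orthonormal ℝ ![u, v] → Orthonormal ℝ ![u, v, π u v]) (x y w : V) :
    ⟪π x y, π x w⟫ = ⟪x, x⟫ * ⟪y, w⟫ - ⟪x, y⟫ * ⟪x, w⟫ := by
  have h1 := pi_contract π hπalt hπvp x (y + w)
  have h2 := pi_contract π hπalt hπvp x y
  have h3 := pi_contract π hπalt hπvp x w
  have hcomm : ⟪π x w, π x y⟫ = ⟪π x y, π x w⟫ := real_inner_comm _ _
  have hyw : ⟪w, y⟫ = ⟪y, w⟫ := real_inner_comm _ _
  simp only [map_add, inner_add_left, inner_add_right] at h1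
  rw [hcomm, hyw] at h1
  linarith

end Aux

theorem stmt9
    {V : Type*} [NormedAddCommGroup V] [InnerProductSpace ℝ V]
    [FiniteDimensional ℝ V] (hdim : Module.finrank ℝ V = 7)
    (π : V →ₗ[ℝ] V →ₗ[ℝ] V) (hπalt : ∀ x : V, π x x = 0)
    (hπvp : ∀ u v : V, Orthonormal ℝ ![u, v] → Orthonormal ℝ ![u, v, π u v])
    (lam μ ν : ℝ) (hlm : lam ≠ μ) (hln : lam ≠ ν) (hmn : μ ≠ ν)
    (δ : V →ₗ[ℝ] V) (hδ : LinearMap.IsSymmetric δ)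
    (h1 : Module.finrank ℝ (Module.End.eigenspace δ lam) = 1)
    (h1' : Module.finrank ℝ (Module.End.eigenspace δ μ) = 1)
    (h5 : Module.finrank ℝ (Module.End.eigenspace δ ν) = 5) :
    ∃ u v z : V, Orthonormal ℝ ![u, v, π u v, z] ∧
      δ u = lam • u ∧ δ v = μ • v ∧ δ (π u v) = ν • π u v ∧ δ z = ν • z ∧
      δ (π u z) = ν • π u z ∧ δ (π v z) = ν • π v z ∧
      δ (π (π u v) z) = ν • π (π u v) z := by
  classical
  set E : ℝ → Submodule ℝ V := fun a => Module.End.eigenspace δ a with hE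
  have h1E : Module.finrank ℝ (E lam) = 1 := h1
  have h1'E : Module.finrank ℝ (E μ) = 1 := h1'
  have h5E : Module.finrank ℝ (E ν) = 5 := h5
  -- orthogonality of eigenspaces
  have horth : ∀ (a b : ℝ), a ≠ b → ∀ x ∈ E a, ∀ y ∈ E b, ⟪x, y⟫ = 0 := by
    intro a b hab x hx y hy
    rw [hE, Module.End.mem_eigenspace_iff] at hx hy
    have h := hδ x y
    rw [hx, hy, real_inner_smul_left, real_inner_smul_right] at h
    by_contra h0
    exact hab (mul_right_cancel₀ h0 h)
  -- unit eigenvectors in 1-dim eigenspaces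
  have exu : ∀ a : ℝ, Module.finrank ℝ (E a) = 1 →
      ∃ u : V, u ∈ E a ∧ ‖u‖ = 1 ∧ ∀ x ∈ E a, ∃ c : ℝ, x = c • u := by
    intro a ha
    obtain ⟨v, hv0, hv⟩ := finrank_eq_one_iff'.mp ha
    have hv0' : (v : V) ≠ 0 := fun h => hv0 (Subtype.ext h)
    have hnv : ‖(v : V)‖ ≠ 0 := norm_ne_zero_iff.mpr hv0'
    refine ⟨‖(v : V)‖⁻¹ • (v : V), Submodule.smul_mem _ _ v.2, norm_smul_inv_norm hv0', ?_⟩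
    intro x hx
    obtain ⟨c, hc⟩ := hv ⟨x, hx⟩
    have hc' : c • (v : V) = x := congrArg Subtype.val hc
    refine ⟨c * ‖(v : V)‖, ?_⟩
    rw [smul_smul, mul_assoc, mul_inv_cancel₀ hnv, mul_one, hc']
  obtain ⟨u, huE, hu1, huS⟩ := exu lam h1
  obtain ⟨v, hvE, hv1, hvS⟩ := exu μ h1'
  have huv : ⟪u, v⟫ = 0 := horth lam μ hlm u huE v hvE
  have honuv : Orthonormal ℝ ![u, v, π u v] := hπvp u v (on2_s9 hu1 hv1 huv)
  have hπuv1 : ‖π u v‖ = 1 := by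
    have := honuv.1 2
    simpa using this
  have hπuv0 : π u v ≠ 0 := by
    intro h
    rw [h, norm_zero] at hπuv1
    exact one_ne_zero hπuv1.symm
  -- the sup of the two 1-dim eigenspaces
  set K : Submodule ℝ V := E lam ⊔ E μ with hK
  have hinf : E lam ⊓ E μ = ⊥ := by
    rw [eq_bot_iff]
    intro x hx
    have hx1 : δ x = lam • x := Module.End.mem_eigenspace_iff.mp hx.1
    have hx2 : δ x = μ • x := Module.End.mem_eigenspace_iff.mp hx.2
    have : (lam - μ) • x = 0 := by rw [sub_smul, ← hx1, ← hx2, sub_self]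
    rcases smul_eq_zero.mp this with h | h
    · exact absurd (sub_eq_zero.mp h) hlm
    · simpa using h
  have hKfin : Module.finrank ℝ K = 2 := by
    have h := Submodule.finrank_sup_add_finrank_inf_eq (E lam) (E μ)
    rw [hinf, finrank_bot, h1E, h1'E, ← hK] at h
    omega
  have hEν : E ν = Kᗮ := by
    have hle : E ν ≤ Kᗮ := by
      intro x hx
      rw [Submodule.mem_orthogonal]
      intro y hy
      rcases Submodule.mem_sup.mp hy with ⟨a, ha, b, hb, rfl⟩
      rw [inner_add_left, horth lam ν hln a ha x hx, horth μ ν hmn b hb x hx, add_zero]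
    refine Submodule.eq_of_le_of_finrank_eq hle ?_
    have h := Submodule.finrank_add_finrank_orthogonal K
    rw [hKfin, hdim] at h
    rw [h5E]
    omega
  have hmemν : ∀ x : V, ⟪u, x⟫ = 0 → ⟪v, x⟫ = 0 → x ∈ E ν := by
    intro x hxu hxv
    rw [hEν, Submodule.mem_orthogonal]
    intro y hy
    rcases Submodule.mem_sup.mp hy with ⟨a, ha, b, hb, rfl⟩
    obtain ⟨c, rfl⟩ := huS a ha
    obtain ⟨d, rfl⟩ := hvS b hb
    rw [inner_add_left, real_inner_smul_left, real_inner_smul_left, hxu, hxv]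
    ring
  -- choose z
  set W : Submodule ℝ V := E ν ⊓ (ℝ ∙ (π u v))ᗮ with hW
  have hWfin : 0 < Module.finrank ℝ W := by
    have h := Submodule.finrank_sup_add_finrank_inf_eq (E ν) ((ℝ ∙ (π u v))ᗮ)
    have hsp : Module.finrank ℝ (ℝ ∙ (π u v)) = 1 := finrank_span_singleton hπuv0
    have ho := Submodule.finrank_add_finrank_orthogonal (ℝ ∙ (π u v))
    rw [hsp, hdim] at ho
    have hle : Module.finrank ℝ ((E ν) ⊔ ((ℝ ∙ (π u v))ᗮ) : Submodule ℝ V) ≤ 7 := by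
      rw [← hdim]; exact Submodule.finrank_le _
    rw [h5E, ← hW] at h
    omega
  have hWne : W ≠ ⊥ := by
    intro h
    rw [h, finrank_bot] at hWfin
    omega
  obtain ⟨z0, hz0W, hz00⟩ := Submodule.exists_mem_ne_zero_of_ne_bot hWne
  set z : V := ‖z0‖⁻¹ • z0 with hz
  have hz1 : ‖z‖ = 1 := norm_smul_inv_norm hz00
  have hzE : z ∈ E ν := Submodule.smul_mem _ _ hz0W.1
  have hπuvz : ⟪π u v, z⟫ = 0 := by
    have h0 : ⟪π u v, z0⟫ = 0 :=
      hz0W.2 (π u v) (Submodule.mem_span_singleton_self _)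
    rw [hz, real_inner_smul_right, h0, mul_zero]
  have hzu : ⟪u, z⟫ = 0 := horth lam ν hln u huE z hzE
  have hzv : ⟪v, z⟫ = 0 := horth μ ν hmn v hvE z hzE
  -- memberships in E ν
  have huvm : π u v ∈ E ν := by
    apply hmemν
    · rw [real_inner_comm]; exact pi_inner_left π hπalt hπvp u v
    · rw [real_inner_comm]; exact pi_inner_right π hπalt hπvp u v
  have huzm : π u z ∈ E ν := by
    apply hmemν
    · rw [real_inner_comm]; exact pi_inner_left π hπalt hπvp u z
    · rw [real_inner_comm, pi_skew π hπalt hπvp u z v, hπuvz, neg_zero]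
  have hvzm : π v z ∈ E ν := by
    apply hmemν
    · rw [real_inner_comm, pi_skew π hπalt hπvp v z u, pi_neg π hπalt u v,
        inner_neg_left, neg_neg, hπuvz]
    · rw [real_inner_comm]; exact pi_inner_left π hπalt hπvp v z
  have hzv' : ⟪z, v⟫ = 0 := by rw [real_inner_comm]; exact hzv
  have hzu' : ⟪z, u⟫ = 0 := by rw [real_inner_comm]; exact hzu
  have hvu : ⟪v, u⟫ = 0 := by rw [real_inner_comm]; exact huv
  have huvzm : π (π u v) z ∈ E ν := by
    apply hmemν
    · have e1 : ⟪π (π u v) z, u⟫ = -⟪π (π u v) u, z⟫ :=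
        pi_skew π hπalt hπvp (π u v) z u
      have e2 : π (π u v) u = - π u (π u v) := pi_neg π hπalt u (π u v)
      have e3 : ⟪π u (π u v), z⟫ = -⟪π u z, π u v⟫ :=
        pi_skew π hπalt hπvp u (π u v) z
      have e4 : ⟪π u z, π u v⟫ = ⟪u, u⟫ * ⟪z, v⟫ - ⟪u, z⟫ * ⟪u, v⟫ :=
        pi_contract' π hπalt hπvp u z v
      rw [real_inner_comm, e1, e2, inner_neg_left, e3, e4, hzv', hzu, huv]
      ring
    · have e1 : ⟪π (π u v) z, v⟫ = -⟪π (π u v) v, z⟫ :=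
        pi_skew π hπalt hπvp (π u v) z v
      have e2 : π (π u v) v = - π v (π u v) := pi_neg π hπalt v (π u v)
      have e3 : ⟪π v (π u v), z⟫ = -⟪π v z, π u v⟫ :=
        pi_skew π hπalt hπvp v (π u v) z
      have e5 : ⟪π v z, π u v⟫ = - ⟪π v z, π v u⟫ := by
        rw [pi_neg π hπalt v u, inner_neg_right]
      have e6 : ⟪π v z, π v u⟫ = ⟪v, v⟫ * ⟪z, u⟫ - ⟪v, z⟫ * ⟪v, u⟫ :=
        pi_contract' π hπalt hπvp v z u
      rw [real_inner_comm, e1, e2, inner_neg_left, e3, e5, e6, hzu', hzv, hvu]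
      ring
  -- conclude
  refine ⟨u, v, z, ?_, ?_, ?_, ?_, ?_, ?_, ?_, ?_⟩
  · apply on4 hu1 hv1 hπuv1 hz1 huv
    · rw [real_inner_comm]; exact pi_inner_left π hπalt hπvp u v
    · exact hzu
    · rw [real_inner_comm]; exact pi_inner_right π hπalt hπvp u v
    · exact hzv
    · exact hπuvz
  · exact Module.End.mem_eigenspace_iff.mp huE
  · exact Module.End.mem_eigenspace_iff.mp hvE
  · exact Module.End.mem_eigenspace_iff.mp huvm
  · exact Module.End.mem_eigenspace_iff.mp hzE
  · exact Module.End.mem_eigenspace_iff.mp huzm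
  · exact Module.End.mem_eigenspace_iff.mp hvzm
  · exact Module.End.mem_eigenspace_iff.mp huvzm
end
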